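/- If I = I_B and J = I_C are the toric ideals of integer vector configurations B = (b^α_β) and C = (c^α_γ) that are NA-homogeneous (i.e., there exist matrices with a_α = B·b^α_β = C·c^α_γ for all α, β, γ), then the toric fiber product I_B ×_A I_C equals the toric ideal of the vector configuration B ×_A C whose columns are the stacked vectors (b^α_β; c^α_γ) for α ∈ [d], β ∈ [d_α], γ ∈ [d'_α]. -/

import Mathlib

set_option linter.unusedSectionVars false

open MvPolynomial
open scoped TensorProduct Classical

noncomputable section

variable {K : Type*} [Field K] {d h : ℕ}

/-- The map `φ_S : K[z] → K[x] ⊗ K[y]`, `z^α_{β,γ} ↦ x^α_β ⊗ y^α_γ`. -/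
def phiS (K : Type*) [Field K] (dx dy : Fin d → ℕ) :
    MvPolynomial (Σ α : Fin d, Fin (dx α) × Fin (dy α)) K →ₐ[K]
      (MvPolynomial (Σ α : Fin d, Fin (dx α)) K ⊗[K]
        MvPolynomial (Σ α : Fin d, Fin (dy α)) K) :=
  aeval (fun s => (X ⟨s.1, s.2.1⟩ : MvPolynomial (Σ α : Fin d, Fin (dx α)) K) ⊗ₜ[K]
    (X ⟨s.1, s.2.2⟩ : MvPolynomial (Σ α : Fin d, Fin (dy α)) K))

/-- The composite map `(π_I ⊗ π_J) ∘ φ_S : K[z] → R ⊗ S`. -/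
def psiTFP (K : Type*) [Field K] (dx dy : Fin d → ℕ)
    (I : Ideal (MvPolynomial (Σ α : Fin d, Fin (dx α)) K))
    (J : Ideal (MvPolynomial (Σ α : Fin d, Fin (dy α)) K)) :
    MvPolynomial (Σ α : Fin d, Fin (dx α) × Fin (dy α)) K →ₐ[K]
      ((MvPolynomial (Σ α : Fin d, Fin (dx α)) K ⧸ I) ⊗[K]
        (MvPolynomial (Σ α : Fin d, Fin (dy α)) K ⧸ J)) :=
  (Algebra.TensorProduct.map (Ideal.Quotient.mkₐ K I) (Ideal.Quotient.mkₐ K J)).comp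
    (phiS K dx dy)

/-- The toric fiber product `I ×_A J = ker((π_I ⊗ π_J) ∘ φ_S)`. -/
def TFP (K : Type*) [Field K] (dx dy : Fin d → ℕ)
    (I : Ideal (MvPolynomial (Σ α : Fin d, Fin (dx α)) K))
    (J : Ideal (MvPolynomial (Σ α : Fin d, Fin (dy α)) K)) :
    Ideal (MvPolynomial (Σ α : Fin d, Fin (dx α) × Fin (dy α)) K) :=
  RingHom.ker (psiTFP K dx dy I J).toRingHom


/-- The toric ideal of a vector configuration `D : σ → V`. -/
def toricIdeal (K : Type*) [Field K] {σ V : Type*} [Fintype σ] [AddCommGroup V]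
    (D : σ → V) : Ideal (MvPolynomial σ K) :=
  Ideal.span {p | ∃ u v : σ →₀ ℕ, (∑ s, ((u s : ℤ) - (v s : ℤ)) • D s) = 0 ∧
    p = monomial u 1 - monomial v 1}

section ToricAux

variable {σ G : Type*} [Fintype σ] [AddCommGroup G]

/-- weight of an exponent vector -/
def tfpWt (D : σ → G) (u : σ →₀ ℕ) : G := ∑ s, u s • D s

/-- the monomial map into the group algebra -/
def tfpMmap (K : Type*) [Field K] (D : σ → G) :
    MvPolynomial σ K →ₐ[K] AddMonoidAlgebra K G :=
  aeval (fun s => AddMonoidAlgebra.single (D s) 1)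

variable (K : Type*) [Field K]

lemma tfpMmap_X (D : σ → G) (s : σ) :
    tfpMmap K D (X s) = AddMonoidAlgebra.single (D s) 1 := by
  simp [tfpMmap]

lemma tfp_prod_single {τ : Type*} (t : Finset τ) (g : τ → G) :
    (∏ s ∈ t, AddMonoidAlgebra.single (g s) (1 : K)) =
      AddMonoidAlgebra.single (∑ s ∈ t, g s) 1 := by
  rw [AddMonoidAlgebra.prod_single]; simp

lemma tfpMmap_prod_pow (D : σ → G) {τ : Type*} [Fintype τ] (f : τ → σ) (u : τ →₀ ℕ) :
    tfpMmap K D (∏ s, X (f s) ^ u s) =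
      AddMonoidAlgebra.single (∑ s, u s • D (f s)) 1 := by
  rw [map_prod]
  simp only [map_pow, tfpMmap_X, AddMonoidAlgebra.single_pow, one_pow]
  exact tfp_prod_single K _ _

lemma tfp_monomial_one_eq (u : σ →₀ ℕ) :
    (monomial u 1 : MvPolynomial σ K) = ∏ s, X s ^ u s := by
  rw [monomial_eq, C_1, one_mul, Finsupp.prod_fintype]
  intro s; exact pow_zero _

lemma tfpMmap_monomial_one (D : σ → G) (u : σ →₀ ℕ) :
    tfpMmap K D (monomial u 1) = AddMonoidAlgebra.single (tfpWt D u) (1 : K) := by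
  rw [tfp_monomial_one_eq]
  exact tfpMmap_prod_pow K D id u

lemma tfpMmap_monomial (D : σ → G) (u : σ →₀ ℕ) (r : K) :
    tfpMmap K D (monomial u r) = AddMonoidAlgebra.single (tfpWt D u) r := by
  have h : (monomial u r : MvPolynomial σ K) = C r * monomial u 1 := by
    rw [C_mul_monomial, mul_one]
  rw [h, map_mul, tfpMmap_monomial_one]
  have hC : tfpMmap K D (C r) = AddMonoidAlgebra.single (0 : G) r := by
    simp [tfpMmap, algHom_C, Algebra.algebraMap_eq_smul_one]
    rw [AddMonoidAlgebra.one_def, AddMonoidAlgebra.smul_single', mul_one]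
  rw [hC, AddMonoidAlgebra.single_mul_single, zero_add, mul_one]

lemma tfp_cond_iff (D : σ → G) (u v : σ →₀ ℕ) :
    (∑ s, ((u s : ℤ) - (v s : ℤ)) • D s) = 0 ↔ tfpWt D u = tfpWt D v := by
  have h : ∀ s : σ, ((u s : ℤ) - (v s : ℤ)) • D s = u s • D s - v s • D s := fun s => by
    rw [sub_smul, natCast_zsmul, natCast_zsmul]
  simp_rw [h, Finset.sum_sub_distrib, sub_eq_zero]
  rfl

lemma tfp_binomial_mem (D : σ → G) (u v : σ →₀ ℕ) (hw : tfpWt D u = tfpWt D v) :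
    (monomial u 1 - monomial v 1 : MvPolynomial σ K) ∈ toricIdeal K D :=
  Ideal.subset_span ⟨u, v, (tfp_cond_iff D u v).2 hw, rfl⟩

lemma tfpMmap_eq_sum (D : σ → G) (p : MvPolynomial σ K) :
    tfpMmap K D p = ∑ u ∈ p.support, AddMonoidAlgebra.single (tfpWt D u) (coeff u p) := by
  conv_lhs => rw [p.as_sum]
  rw [map_sum]
  exact Finset.sum_congr rfl fun u _ => tfpMmap_monomial K D u _

lemma tfp_ker_le_toric (D : σ → G) :
    RingHom.ker (tfpMmap K D).toRingHom ≤ toricIdeal K D := by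
  intro p hp
  rw [RingHom.mem_ker] at hp
  suffices H : ∀ n (p : MvPolynomial σ K), p.support.card ≤ n →
      tfpMmap K D p = 0 → p ∈ toricIdeal K D from H p.support.card p le_rfl hp
  intro n
  induction n with
  | zero =>
    intro p hcard _
    have hp0 : p = 0 := by
      rw [Nat.le_zero, Finset.card_eq_zero, MvPolynomial.support_eq_empty] at hcard
      exact hcard
    simp [hp0]
  | succ n ih =>
    intro p hcard hker
    by_cases hp0 : p = 0
    · simp [hp0]
    obtain ⟨u, hu⟩ : p.support.Nonempty := MvPolynomial.support_nonempty.2 hp0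
    have hcu : coeff u p ≠ 0 := MvPolynomial.mem_support_iff.1 hu
    set Sf := p.support.filter (fun w => tfpWt D w = tfpWt D u) with hSf
    have hsum : ∑ w ∈ Sf, coeff w p = 0 := by
      have h0 : (tfpMmap K D p).coeff (tfpWt D u) = 0 := by rw [hker]; rfl
      rw [tfpMmap_eq_sum, AddMonoidAlgebra.coeff_sum, Finsupp.finset_sum_apply] at h0
      simp_rw [AddMonoidAlgebra.coeff_single, Finsupp.single_apply] at h0
      rw [hSf, Finset.sum_filter]
      exact h0
    have huS : u ∈ Sf := Finset.mem_filter.2 ⟨hu, rfl⟩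
    have hex : ∃ v ∈ Sf, v ≠ u := by
      by_contra hcon
      push_neg at hcon
      have hSu : Sf = {u} := Finset.eq_singleton_iff_unique_mem.2 ⟨huS, fun w hw => hcon w hw⟩
      rw [hSu, Finset.sum_singleton] at hsum
      exact hcu hsum
    obtain ⟨v, hvS, hvu⟩ := hex
    have hv : v ∈ p.support := (Finset.mem_filter.1 hvS).1
    have hwv : tfpWt D v = tfpWt D u := (Finset.mem_filter.1 hvS).2
    set g : MvPolynomial σ K := monomial u 1 - monomial v 1 with hg
    have hgmem : g ∈ toricIdeal K D := tfp_binomial_mem K D u v hwv.symm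
    have hgker : tfpMmap K D g = 0 := by
      rw [hg, map_sub, tfpMmap_monomial_one, tfpMmap_monomial_one, hwv, sub_self]
    set q := p - (coeff u p) • g with hq
    have hqker : tfpMmap K D q = 0 := by
      rw [hq, map_sub, map_smul, hker, hgker, smul_zero, sub_zero]
    have hqsupp : q.support ⊆ p.support.erase u := by
      intro w hw
      have hwq : coeff w q ≠ 0 := MvPolynomial.mem_support_iff.1 hw
      rw [hq, hg] at hwq
      simp only [coeff_sub, coeff_smul, coeff_monomial, smul_eq_mul] at hwq
      rcases eq_or_ne w u with rfl | hwu
      · exfalso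
        apply hwq
        rw [if_pos rfl, if_neg hvu, mul_sub, mul_one, mul_zero, sub_zero, sub_self]
      · refine Finset.mem_erase.2 ⟨hwu, ?_⟩
        rcases eq_or_ne w v with rfl | hwv2
        · exact hv
        · rw [if_neg (fun h => hwu h.symm), if_neg (fun h => hwv2 h.symm)] at hwq
          simp only [sub_zero, mul_zero] at hwq
          exact MvPolynomial.mem_support_iff.2 (by simpa using hwq)
    have hqcard : q.support.card ≤ n := by
      have h1 := Finset.card_le_card hqsupp
      have h2 : (p.support.erase u).card < p.support.card := Finset.card_erase_lt_of_mem hu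
      omega
    have hqmem := ih q hqcard hqker
    have hpq : p = q + (coeff u p) • g := by rw [hq]; ring
    rw [hpq]
    refine Ideal.add_mem _ hqmem ?_
    rw [MvPolynomial.smul_eq_C_mul]
    exact Ideal.mul_mem_left _ _ hgmem

lemma tfp_toric_le_ker {G' : Type*} [AddCommGroup G'] (D : σ → G) (D' : σ → G')
    (hDD' : ∀ u v : σ →₀ ℕ, tfpWt D u = tfpWt D v →
    tfpWt D' u = tfpWt D' v) :
    toricIdeal K D ≤ RingHom.ker (tfpMmap K D').toRingHom := by
  rw [toricIdeal, Ideal.span_le]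
  rintro p ⟨u, v, hcond, rfl⟩
  rw [SetLike.mem_coe, RingHom.mem_ker]
  show tfpMmap K D' (monomial u 1 - monomial v 1) = 0
  rw [map_sub, tfpMmap_monomial_one, tfpMmap_monomial_one,
    hDD' u v ((tfp_cond_iff D u v).1 hcond), sub_self]

end ToricAux


lemma tfp_prod_tmul_pow {K R S τ : Type*} [CommSemiring K] [CommSemiring R] [CommSemiring S]
    [Algebra K R] [Algebra K S] (t : Finset τ) (x : τ → R) (y : τ → S) (u : τ → ℕ) :
    ∏ s ∈ t, (x s ⊗ₜ[K] y s) ^ u s =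
      (∏ s ∈ t, x s ^ u s) ⊗ₜ[K] (∏ s ∈ t, y s ^ u s) := by
  classical
  induction t using Finset.induction_on with
  | empty => simp [Algebra.TensorProduct.one_def]
  | insert _ _ hs ih =>
    rw [Finset.prod_insert hs, Finset.prod_insert hs, Finset.prod_insert hs, ih,
      Algebra.TensorProduct.tmul_pow, Algebra.TensorProduct.tmul_mul_tmul]


set_option maxHeartbeats 1600000
set_option synthInstance.maxHeartbeats 2000000

/-- The toric fiber product of the `ℕ𝒜`-homogeneous toric ideals `I_B` and `I_C` is
the toric ideal of the stacked configuration `B ×_A C` with columns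
`(b^α_β; c^α_γ)`. -/
theorem tfp_of_toric_is_toric (K : Type*) [Field K] {d h h1 h2 : ℕ}
    (a : Fin d → Fin h → ℤ) (dx dy : Fin d → ℕ)
    (b : (α : Fin d) → Fin (dx α) → Fin h1 → ℤ)
    (c : (α : Fin d) → Fin (dy α) → Fin h2 → ℤ)
    (B : Matrix (Fin h) (Fin h1) ℤ) (C : Matrix (Fin h) (Fin h2) ℤ)
    (hb : ∀ (α : Fin d) (β : Fin (dx α)), B.mulVec (b α β) = a α)
    (hc : ∀ (α : Fin d) (γ : Fin (dy α)), C.mulVec (c α γ) = a α) :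
    TFP K dx dy (toricIdeal K (fun s : Σ α : Fin d, Fin (dx α) => b s.1 s.2))
        (toricIdeal K (fun s : Σ α : Fin d, Fin (dy α) => c s.1 s.2)) =
      toricIdeal K (fun s : Σ α : Fin d, Fin (dx α) × Fin (dy α) =>
        ((b s.1 s.2.1, c s.1 s.2.2) : (Fin h1 → ℤ) × (Fin h2 → ℤ))) := by
  classical
  set Db : (Σ α : Fin d, Fin (dx α)) → (Fin h1 → ℤ) := fun s => b s.1 s.2 with hDb
  set Dc : (Σ α : Fin d, Fin (dy α)) → (Fin h2 → ℤ) := fun s => c s.1 s.2 with hDc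
  set Dbc : (Σ α : Fin d, Fin (dx α) × Fin (dy α)) → (Fin h1 → ℤ) × (Fin h2 → ℤ) :=
    fun s => (b s.1 s.2.1, c s.1 s.2.2) with hDbc
  set I := toricIdeal K Db with hI
  set J := toricIdeal K Dc with hJ
  -- weights of the stacked configuration
  have hwt : ∀ u : (Σ α : Fin d, Fin (dx α) × Fin (dy α)) →₀ ℕ,
      tfpWt Dbc u = (∑ s, u s • b s.1 s.2.1, ∑ s, u s • c s.1 s.2.2) := by
    intro u
    refine Prod.ext ?_ ?_ <;>
      simp [tfpWt, hDbc, Prod.fst_sum, Prod.snd_sum]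
  -- ψ on variables and monomials
  have hpsiX : ∀ z : Σ α : Fin d, Fin (dx α) × Fin (dy α),
      psiTFP K dx dy I J (X z) =
        (Ideal.Quotient.mkₐ K I (X ⟨z.1, z.2.1⟩)) ⊗ₜ[K]
          (Ideal.Quotient.mkₐ K J (X ⟨z.1, z.2.2⟩)) := by
    intro z
    simp [psiTFP, phiS]
  have hpsiMon : ∀ w : (Σ α : Fin d, Fin (dx α) × Fin (dy α)) →₀ ℕ,
      psiTFP K dx dy I J (monomial w 1) =
        (Ideal.Quotient.mkₐ K I (∏ s, X ⟨s.1, s.2.1⟩ ^ w s)) ⊗ₜ[K]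
          (Ideal.Quotient.mkₐ K J (∏ s, X ⟨s.1, s.2.2⟩ ^ w s)) := by
    intro w
    rw [tfp_monomial_one_eq, ← AlgHom.coe_toRingHom, map_prod]
    simp_rw [map_pow, AlgHom.coe_toRingHom, hpsiX]
    rw [tfp_prod_tmul_pow, map_prod, map_prod]
    simp_rw [map_pow]
  refine le_antisymm ?_ ?_
  · -- TFP ≤ toric
    refine le_trans ?_ (tfp_ker_le_toric K Dbc)
    set D1 : (Σ α : Fin d, Fin (dx α)) → (Fin h1 → ℤ) × (Fin h2 → ℤ) :=
      fun s => (Db s, 0) with hD1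
    set D2 : (Σ α : Fin d, Fin (dy α)) → (Fin h1 → ℤ) × (Fin h2 → ℤ) :=
      fun s => (0, Dc s) with hD2
    have hwt1 : ∀ u, tfpWt D1 u = (tfpWt Db u, (0 : Fin h2 → ℤ)) := by
      intro u
      refine Prod.ext ?_ ?_ <;> simp [tfpWt, hD1, Prod.fst_sum, Prod.snd_sum]
    have hwt2 : ∀ u, tfpWt D2 u = ((0 : Fin h1 → ℤ), tfpWt Dc u) := by
      intro u
      refine Prod.ext ?_ ?_ <;> simp [tfpWt, hD2, Prod.fst_sum, Prod.snd_sum]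
    have hI1 : I ≤ RingHom.ker (tfpMmap K D1).toRingHom :=
      tfp_toric_le_ker K Db D1 (fun u v huv => by rw [hwt1, hwt1, huv])
    have hJ1 : J ≤ RingHom.ker (tfpMmap K D2).toRingHom :=
      tfp_toric_le_ker K Dc D2 (fun u v huv => by rw [hwt2, hwt2, huv])
    set Φ₁ : (MvPolynomial (Σ α : Fin d, Fin (dx α)) K ⧸ I) →ₐ[K]
        AddMonoidAlgebra K ((Fin h1 → ℤ) × (Fin h2 → ℤ)) :=
      Ideal.Quotient.liftₐ I (tfpMmap K D1)
        (fun a ha => RingHom.mem_ker.1 (hI1 ha)) with hPhi1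
    set Φ₂ : (MvPolynomial (Σ α : Fin d, Fin (dy α)) K ⧸ J) →ₐ[K]
        AddMonoidAlgebra K ((Fin h1 → ℤ) × (Fin h2 → ℤ)) :=
      Ideal.Quotient.liftₐ J (tfpMmap K D2)
        (fun a ha => RingHom.mem_ker.1 (hJ1 ha)) with hPhi2
    set Φ := Algebra.TensorProduct.productMap Φ₁ Φ₂ with hPhi
    have hcomp : (tfpMmap K Dbc) = Φ.comp (psiTFP K dx dy I J) := by
      apply MvPolynomial.algHom_ext
      intro z
      rw [AlgHom.comp_apply, hpsiX z, tfpMmap_X, hPhi,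
        Algebra.TensorProduct.productMap_apply_tmul, hPhi1, hPhi2,
        Ideal.Quotient.mkₐ_eq_mk, Ideal.Quotient.mkₐ_eq_mk,
        Ideal.Quotient.liftₐ_apply, Ideal.Quotient.liftₐ_apply]
      show AddMonoidAlgebra.single (Dbc z) (1 : K) =
        tfpMmap K D1 (X ⟨z.1, z.2.1⟩) * tfpMmap K D2 (X ⟨z.1, z.2.2⟩)
      rw [tfpMmap_X, tfpMmap_X, AddMonoidAlgebra.single_mul_single, mul_one]
      congr 1
      simp [hD1, hD2, hDbc, hDb, hDc, Prod.mk_add_mk]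
    intro p hp
    rw [TFP, RingHom.mem_ker] at hp
    rw [RingHom.mem_ker]
    show tfpMmap K Dbc p = 0
    rw [hcomp, AlgHom.comp_apply]
    have hp' : psiTFP K dx dy I J p = 0 := hp
    rw [hp']
    exact map_zero Φ
  · -- toric ≤ TFP
    rw [toricIdeal, Ideal.span_le]
    rintro p ⟨u, v, hcond, rfl⟩
    rw [SetLike.mem_coe, TFP, RingHom.mem_ker]
    show psiTFP K dx dy I J (monomial u 1 - monomial v 1) = 0
    have hw := (tfp_cond_iff Dbc u v).1 hcond
    have hw1 : (∑ s, u s • b s.1 s.2.1) = ∑ s, v s • b s.1 s.2.1 :=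
      congrArg Prod.fst ((hwt u).symm.trans (hw.trans (hwt v)))
    have hw2 : (∑ s, u s • c s.1 s.2.2) = ∑ s, v s • c s.1 s.2.2 :=
      congrArg Prod.snd ((hwt u).symm.trans (hw.trans (hwt v)))
    have hPuv : Ideal.Quotient.mkₐ K I (∏ s, X ⟨s.1, s.2.1⟩ ^ u s) =
        Ideal.Quotient.mkₐ K I (∏ s, X ⟨s.1, s.2.1⟩ ^ v s) := by
      rw [Ideal.Quotient.mkₐ_eq_mk, Ideal.Quotient.eq]
      apply tfp_ker_le_toric K Db
      rw [RingHom.mem_ker]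
      show tfpMmap K Db _ = 0
      rw [map_sub,
        tfpMmap_prod_pow K Db (fun s : Σ α : Fin d, Fin (dx α) × Fin (dy α) => ⟨s.1, s.2.1⟩) u,
        tfpMmap_prod_pow K Db (fun s : Σ α : Fin d, Fin (dx α) × Fin (dy α) => ⟨s.1, s.2.1⟩) v]
      show AddMonoidAlgebra.single (∑ s, u s • b s.1 s.2.1) 1 -
        AddMonoidAlgebra.single (∑ s, v s • b s.1 s.2.1) 1 = 0
      rw [hw1, sub_self]
    have hQuv : Ideal.Quotient.mkₐ K J (∏ s, X ⟨s.1, s.2.2⟩ ^ u s) =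
        Ideal.Quotient.mkₐ K J (∏ s, X ⟨s.1, s.2.2⟩ ^ v s) := by
      rw [Ideal.Quotient.mkₐ_eq_mk, Ideal.Quotient.eq]
      apply tfp_ker_le_toric K Dc
      rw [RingHom.mem_ker]
      show tfpMmap K Dc _ = 0
      rw [map_sub,
        tfpMmap_prod_pow K Dc (fun s : Σ α : Fin d, Fin (dx α) × Fin (dy α) => ⟨s.1, s.2.2⟩) u,
        tfpMmap_prod_pow K Dc (fun s : Σ α : Fin d, Fin (dx α) × Fin (dy α) => ⟨s.1, s.2.2⟩) v]
      show AddMonoidAlgebra.single (∑ s, u s • c s.1 s.2.2) 1 -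
        AddMonoidAlgebra.single (∑ s, v s • c s.1 s.2.2) 1 = 0
      rw [hw2, sub_self]
    rw [map_sub, hpsiMon u, hpsiMon v, hPuv, hQuv, sub_self]
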